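/- Let a : ℤⁿ × 𝕋^{nr} → ℂ be such that T_a : ℓ^{p₁}(ℤⁿ)×⋯×ℓ^{p_r}(ℤⁿ) → ℓ^{p}(ℤⁿ) is a nuclear multilinear operator. Then the function ℓ = (ℓ₁,…,ℓ_r) ↦ ‖ ∫_{𝕋^{nr}} a(x,ξ) e^{2πi(x̃-ℓ)·ξ} dξ ‖_{ℓ^p(ℤⁿ_x)} belongs to the mixed-norm space ℓ^{p₁'}(ℤⁿ)×⋯×ℓ^{p_r'}(ℤⁿ), where x̃ = (x,…,x) ∈ ℤ^{nr}. -/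

import Mathlib

open MeasureTheory Real
open scoped ENNReal

/-- The `ℓ^q`-norm (with `q ∈ [1,∞]`) of an `ℝ≥0∞`-valued sequence on `ℤⁿ`. -/
noncomputable def elp (n : ℕ) (q : ℝ≥0∞) (F : (Fin n → ℤ) → ℝ≥0∞) : ℝ≥0∞ :=
  if q = ⊤ then ⨆ x, F x else (∑' x, F x ^ q.toReal) ^ (1 / q.toReal)


section elpLemmas
variable {n : ℕ} {q : ℝ≥0∞}

lemma elp_mono {F G : (Fin n → ℤ) → ℝ≥0∞} (h : ∀ x, F x ≤ G x) : elp n q F ≤ elp n q G := by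
  unfold elp
  split
  · exact iSup_mono h
  · exact ENNReal.rpow_le_rpow (ENNReal.tsum_le_tsum fun x =>
      ENNReal.rpow_le_rpow (h x) ENNReal.toReal_nonneg) (by positivity)

lemma one_le_toReal (hq : 1 ≤ q) (hq' : q ≠ ⊤) : 1 ≤ q.toReal := by
  rw [← ENNReal.toReal_one]
  exact ENNReal.toReal_mono hq' hq

lemma elp_eq_eLpNorm (f : (Fin n → ℤ) → ℂ) (hq : q ≠ 0) :
    eLpNorm f q Measure.count = elp n q (fun x => (‖f x‖₊ : ℝ≥0∞)) := by
  unfold elp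
  split_ifs with h
  · subst h
    rw [eLpNorm_exponent_top, eLpNormEssSup_count]
    rfl
  · rw [eLpNorm_eq_lintegral_rpow_enorm_toReal hq h, lintegral_count]
    rfl

lemma elp_mul_const (hq : 1 ≤ q) (F : (Fin n → ℤ) → ℝ≥0∞) (c : ℝ≥0∞) :
    elp n q (fun x => F x * c) = elp n q F * c := by
  unfold elp
  split_ifs with h
  · exact (ENNReal.iSup_mul _ _).symm
  · have h0 : q.toReal ≠ 0 := by
      have := one_le_toReal hq h; linarith
    have hnn : (0:ℝ) ≤ q.toReal := ENNReal.toReal_nonneg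
    calc (∑' x, (F x * c) ^ q.toReal) ^ (1 / q.toReal)
        = (∑' x, F x ^ q.toReal * c ^ q.toReal) ^ (1 / q.toReal) := by
          simp_rw [ENNReal.mul_rpow_of_nonneg _ _ hnn]
      _ = ((∑' x, F x ^ q.toReal) * c ^ q.toReal) ^ (1 / q.toReal) := by
          rw [ENNReal.tsum_mul_right]
      _ = (∑' x, F x ^ q.toReal) ^ (1 / q.toReal) * (c ^ q.toReal) ^ (1 / q.toReal) := by
          rw [ENNReal.mul_rpow_of_nonneg _ _ (by positivity)]
      _ = (∑' x, F x ^ q.toReal) ^ (1 / q.toReal) * c := by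
          rw [← ENNReal.rpow_mul, mul_one_div, div_self h0, ENNReal.rpow_one]

lemma elp_const_mul (hq : 1 ≤ q) (F : (Fin n → ℤ) → ℝ≥0∞) (c : ℝ≥0∞) :
    elp n q (fun x => c * F x) = c * elp n q F := by
  simp_rw [mul_comm c]
  exact elp_mul_const hq F c

lemma elp_add_le (hq : 1 ≤ q) (F G : (Fin n → ℤ) → ℝ≥0∞) :
    elp n q (fun x => F x + G x) ≤ elp n q F + elp n q G := by
  unfold elp
  split_ifs with h
  · exact iSup_le fun x => add_le_add (le_iSup F x) (le_iSup G x)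
  · have h1 : 1 ≤ q.toReal := one_le_toReal hq h
    have := ENNReal.lintegral_Lp_add_le (μ := Measure.count)
      (measurable_of_countable F).aemeasurable (measurable_of_countable G).aemeasurable h1
    simpa only [lintegral_count, Pi.add_apply] using this

lemma elp_sum_le (hq : 1 ≤ q) (s : Finset ℕ) (F : ℕ → (Fin n → ℤ) → ℝ≥0∞) :
    elp n q (fun x => ∑ k ∈ s, F k x) ≤ ∑ k ∈ s, elp n q (F k) := by
  classical
  induction s using Finset.induction with
  | empty =>
      simp only [Finset.sum_empty]
      unfold elp
      split_ifs with h
      · simp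
      · have h0 : (0:ℝ) < q.toReal := by have := one_le_toReal hq h; linarith
        simp only [ENNReal.zero_rpow_of_pos h0, tsum_zero,
          ENNReal.zero_rpow_of_pos (one_div_pos.mpr h0), le_refl]
  | @insert k s' hk ih =>
      simp only [Finset.sum_insert hk]
      exact le_trans (elp_add_le hq _ _) (add_le_add le_rfl ih)

lemma iSup_rpow_finset (A : Finset ℕ → ℝ≥0∞) {t : ℝ} (ht : 0 < t) :
    (⨆ s, A s) ^ t = ⨆ s, (A s) ^ t := by
  have := (ENNReal.orderIsoRpow t ht).map_iSup A
  simp only [ENNReal.orderIsoRpow_apply] at this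
  exact this

lemma elp_rpow (h : q ≠ ⊤) (h0 : (0:ℝ) < q.toReal) (F : (Fin n → ℤ) → ℝ≥0∞) :
    (elp n q F) ^ q.toReal = ∑' x, F x ^ q.toReal := by
  unfold elp
  rw [if_neg h, ← ENNReal.rpow_mul, one_div_mul_cancel h0.ne', ENNReal.rpow_one]

lemma elp_tsum_le (hq : 1 ≤ q) (F : ℕ → (Fin n → ℤ) → ℝ≥0∞) :
    elp n q (fun x => ∑' k, F k x) ≤ ∑' k, elp n q (F k) := by
  by_cases h : q = ⊤
  · subst h
    simp only [elp, if_pos rfl]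
    exact iSup_le fun x => ENNReal.tsum_le_tsum fun k => le_iSup (F k) x
  · have h1 : 1 ≤ q.toReal := one_le_toReal hq h
    have h0 : (0:ℝ) < q.toReal := by linarith
    have key : ∑' x, (∑' k, F k x) ^ q.toReal ≤ (∑' k, elp n q (F k)) ^ q.toReal := by
      have hmono : Monotone fun (s : Finset ℕ) (x : Fin n → ℤ) =>
          (∑ k ∈ s, F k x) ^ q.toReal := by
        intro s t hst
        exact fun x => ENNReal.rpow_le_rpow
          (Finset.sum_le_sum_of_subset hst) h0.le
      calc ∑' x, (∑' k, F k x) ^ q.toReal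
          = ∑' x, ⨆ s : Finset ℕ, (∑ k ∈ s, F k x) ^ q.toReal := by
            refine tsum_congr fun x => ?_
            rw [ENNReal.tsum_eq_iSup_sum]
            exact iSup_rpow_finset (fun s => ∑ k ∈ s, F k x) h0
        _ = ⨆ s : Finset ℕ, ∑' x, (∑ k ∈ s, F k x) ^ q.toReal := by
            rw [← lintegral_count]
            rw [lintegral_iSup_directed
              (fun s => (measurable_of_countable _).aemeasurable) hmono.directed_le]
            exact iSup_congr fun s => lintegral_count _
        _ ≤ (∑' k, elp n q (F k)) ^ q.toReal := by
            refine iSup_le fun s => ?_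
            rw [← elp_rpow h h0]
            refine ENNReal.rpow_le_rpow ?_ h0.le
            exact le_trans (elp_sum_le hq s F)
              (ENNReal.sum_le_tsum s)
    calc elp n q (fun x => ∑' k, F k x)
        = (∑' x, (∑' k, F k x) ^ q.toReal) ^ (1 / q.toReal) := by
          simp only [elp, if_neg h]
      _ ≤ ((∑' k, elp n q (F k)) ^ q.toReal) ^ (1 / q.toReal) :=
          ENNReal.rpow_le_rpow key (by positivity)
      _ = ∑' k, elp n q (F k) := by
          rw [← ENNReal.rpow_mul, mul_one_div, div_self h0.ne', ENNReal.rpow_one]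

end elpLemmas


/-- The iterated mixed norm `‖⋯‖‖F(·,ℓ₂,…,ℓ_k)‖_{ℓ^{q₁}}‖_{ℓ^{q₂}}⋯‖_{ℓ^{q_k}}`. -/
noncomputable def mixedNorm (n : ℕ) :
    (k : ℕ) → (Fin k → ℝ≥0∞) → ((Fin k → Fin n → ℤ) → ℝ≥0∞) → ℝ≥0∞
  | 0, _, F => F Fin.elim0
  | (k + 1), q, F => mixedNorm n k (fun i => q i.succ)
      (fun ℓ => elp n (q 0) fun z => F (Fin.cons z ℓ))


lemma mixedNorm_mono (n : ℕ) : ∀ (k : ℕ) (q : Fin k → ℝ≥0∞)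
    (F G : (Fin k → Fin n → ℤ) → ℝ≥0∞), (∀ ℓ, F ℓ ≤ G ℓ) →
    mixedNorm n k q F ≤ mixedNorm n k q G
  | 0, q, F, G, h => h _
  | (k+1), q, F, G, h => by
      simp only [mixedNorm]
      exact mixedNorm_mono n k _ _ _ fun ℓ => elp_mono fun z => h _

lemma mixedNorm_tsum_le (n : ℕ) : ∀ (k : ℕ) (q : Fin k → ℝ≥0∞), (∀ i, 1 ≤ q i) →
    ∀ (F : ℕ → (Fin k → Fin n → ℤ) → ℝ≥0∞),
    mixedNorm n k q (fun ℓ => ∑' m, F m ℓ) ≤ ∑' m, mixedNorm n k q (F m)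
  | 0, q, hq, F => le_refl _
  | (k+1), q, hq, F => by
      simp only [mixedNorm]
      refine le_trans (mixedNorm_mono n k _ _ _ fun ℓ => elp_tsum_le (hq 0) (fun m z => F m (Fin.cons z ℓ))) ?_
      exact mixedNorm_tsum_le n k _ (fun i => hq i.succ) _

lemma mixedNorm_const_mul (n : ℕ) : ∀ (k : ℕ) (q : Fin k → ℝ≥0∞), (∀ i, 1 ≤ q i) →
    ∀ (c : ℝ≥0∞) (G : (Fin k → Fin n → ℤ) → ℝ≥0∞),
    mixedNorm n k q (fun ℓ => c * G ℓ) = c * mixedNorm n k q G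
  | 0, q, hq, c, G => rfl
  | (k+1), q, hq, c, G => by
      simp only [mixedNorm]
      rw [show (fun ℓ => elp n (q 0) fun z => c * G (Fin.cons z ℓ))
          = fun ℓ => c * elp n (q 0) (fun z => G (Fin.cons z ℓ)) from
        funext fun ℓ => elp_const_mul (hq 0) _ c]
      exact mixedNorm_const_mul n k _ (fun i => hq i.succ) c _

lemma mixedNorm_prod (n : ℕ) : ∀ (k : ℕ) (q : Fin k → ℝ≥0∞), (∀ i, 1 ≤ q i) →
    ∀ (φ : Fin k → (Fin n → ℤ) → ℝ≥0∞),
    mixedNorm n k q (fun ℓ => ∏ j, φ j (ℓ j)) = ∏ j, elp n (q j) (φ j)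
  | 0, q, hq, φ => by simp [mixedNorm]
  | (k+1), q, hq, φ => by
      simp only [mixedNorm]
      have step : (fun ℓ : Fin k → Fin n → ℤ =>
          elp n (q 0) fun z : Fin n → ℤ => ∏ j, φ j ((Fin.cons z ℓ : Fin (k+1) → Fin n → ℤ) j))
          = fun ℓ => elp n (q 0) (φ 0) * ∏ j : Fin k, φ j.succ (ℓ j) := by
        funext ℓ
        have : (fun z : Fin n → ℤ => ∏ j, φ j ((Fin.cons z ℓ : Fin (k+1) → Fin n → ℤ) j))
            = fun z => φ 0 z * ∏ j : Fin k, φ j.succ (ℓ j) := by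
          funext z
          rw [Fin.prod_univ_succ]
          simp
        rw [this, elp_mul_const (hq 0)]
      rw [step, mixedNorm_const_mul n k _ (fun i => hq i.succ),
        mixedNorm_prod n k _ (fun i => hq i.succ), Fin.prod_univ_succ]

lemma enorm_tsum_le' (v : ℕ → ℂ) :
    (‖∑' k, v k‖₊ : ℝ≥0∞) ≤ ∑' k, (‖v k‖₊ : ℝ≥0∞) := by
  by_cases hs : Summable fun k => ‖v k‖₊
  · refine le_trans (ENNReal.coe_le_coe.2 (nnnorm_tsum_le hs)) ?_
    rw [ENNReal.coe_tsum hs]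
  · have : (∑' k, (‖v k‖₊ : ℝ≥0∞)) = ⊤ := by
      by_contra hne
      exact hs (ENNReal.tsum_coe_ne_top_iff_summable.1 hne)
    simp [this]


/-- If `T_a` is nuclear then `ℓ ↦ ‖∫_{𝕋^{nr}} a(x,ξ)e^{2πi(x̃-ℓ)·ξ}dξ‖_{ℓ^p(ℤⁿ_x)}`
belongs to the mixed-norm space `ℓ^{p₁'}×⋯×ℓ^{p_r'}`. -/
theorem statement9 (n r : ℕ) (hn : 1 ≤ n) (hr : 1 ≤ r)
    (p : ℝ≥0∞) (pj qj : Fin r → ℝ≥0∞)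
    (hp : 1 ≤ p ∧ p < ⊤) (hpj : ∀ j, 1 ≤ pj j ∧ pj j < ⊤)
    (hq : ∀ j, 1 / pj j + 1 / qj j = 1)
    (a : (Fin n → ℤ) → (Fin r → Fin n → ℝ) → ℂ)
    -- `T_a` is nuclear:
    (hnuc : ∃ (h : ℕ → (Fin n → ℤ) → ℂ) (g : ℕ → Fin r → (Fin n → ℤ) → ℂ),
        (∀ k, MemLp (h k) p Measure.count) ∧
        (∀ k j, MemLp (g k j) (qj j) Measure.count) ∧
        (∑' k, eLpNorm (h k) p Measure.count *
            ∏ j, eLpNorm (g k j) (qj j) Measure.count ≠ ⊤) ∧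
        ∀ f : Fin r → (Fin n → ℤ) → ℂ, (∀ j, MemLp (f j) (pj j) Measure.count) →
          ∀ x : Fin n → ℤ,
            (∫ η in Set.univ.pi fun _ : Fin r => Set.univ.pi fun _ : Fin n => Set.Ico (0:ℝ) 1,
                Complex.exp (2 * (π : ℂ) * Complex.I *
                  ((∑ j, ∑ i, (x i : ℝ) * η j i : ℝ) : ℂ)) * a x η *
                ∏ j, ∑' k : Fin n → ℤ,
                  Complex.exp (-2 * (π : ℂ) * Complex.I *
                    ((∑ i, (k i : ℝ) * η j i : ℝ) : ℂ)) * f j k)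
              = ∑' k, (∏ j, ∑' y : Fin n → ℤ, f j y * g k j y) * h k x) :
    mixedNorm n r qj (fun ℓ : Fin r → Fin n → ℤ =>
      eLpNorm (fun x : Fin n → ℤ =>
        ∫ ξ in Set.univ.pi fun _ : Fin r => Set.univ.pi fun _ : Fin n => Set.Ico (0:ℝ) 1,
          a x ξ * Complex.exp (2 * (π : ℂ) * Complex.I *
            ((∑ j, ∑ i, ((x i - ℓ j i : ℤ) : ℝ) * ξ j i : ℝ) : ℂ)))
        p Measure.count) ≠ ⊤ := by
  classical
  obtain ⟨h, g, hh, hg, hsum, hker⟩ := hnuc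
  have hp0 : p ≠ 0 := (lt_of_lt_of_le zero_lt_one hp.1).ne'
  have hqj1 : ∀ j, 1 ≤ qj j := by
    intro j
    have h1 : 1 / qj j ≤ 1 := (le_add_self).trans_eq (hq j)
    rwa [one_div, ENNReal.inv_le_one] at h1
  have hqj0 : ∀ j, qj j ≠ 0 := fun j => (lt_of_lt_of_le zero_lt_one (hqj1 j)).ne'
  -- the test functions
  have hmemf : ∀ (ℓ : Fin r → Fin n → ℤ) (j : Fin r),
      MemLp (fun y => if y = ℓ j then (1:ℂ) else 0) (pj j) Measure.count := by
    intro ℓ j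
    refine ⟨(measurable_of_countable _).aestronglyMeasurable, ?_⟩
    have hpj0 : pj j ≠ 0 := (lt_of_lt_of_le zero_lt_one (hpj j).1).ne'
    rw [elp_eq_eLpNorm _ hpj0]
    unfold elp
    rw [if_neg (hpj j).2.ne]
    have ht : (0:ℝ) < (pj j).toReal := ENNReal.toReal_pos hpj0 (hpj j).2.ne
    have hterm : ∀ y : Fin n → ℤ,
        ((‖if y = ℓ j then (1:ℂ) else 0‖₊ : ℝ≥0∞)) ^ (pj j).toReal
          = if y = ℓ j then 1 else 0 := by
      intro y
      split_ifs <;> simp [ENNReal.zero_rpow_of_pos ht]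
    calc (∑' y, ((‖if y = ℓ j then (1:ℂ) else 0‖₊ : ℝ≥0∞)) ^ (pj j).toReal)
          ^ (1 / (pj j).toReal)
        = (∑' y : Fin n → ℤ, if y = ℓ j then (1:ℝ≥0∞) else 0) ^ (1 / (pj j).toReal) := by
          rw [tsum_congr hterm]
      _ = 1 := by rw [tsum_ite_eq]; simp
      _ < ⊤ := ENNReal.one_lt_top
  -- the kernel identity
  have hker' : ∀ (ℓ : Fin r → Fin n → ℤ) (x : Fin n → ℤ),
      (∫ ξ in Set.univ.pi fun _ : Fin r => Set.univ.pi fun _ : Fin n => Set.Ico (0:ℝ) 1,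
          a x ξ * Complex.exp (2 * (π : ℂ) * Complex.I *
            ((∑ j, ∑ i, ((x i - ℓ j i : ℤ) : ℝ) * ξ j i : ℝ) : ℂ)))
        = ∑' k, (∏ j, g k j (ℓ j)) * h k x := by
    intro ℓ x
    have hid := hker (fun j y => if y = ℓ j then (1:ℂ) else 0) (hmemf ℓ) x
    have hint : ∀ η : Fin r → Fin n → ℝ,
        Complex.exp (2 * (π : ℂ) * Complex.I *
            ((∑ j, ∑ i, (x i : ℝ) * η j i : ℝ) : ℂ)) * a x η *
          ∏ j, ∑' k : Fin n → ℤ,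
            Complex.exp (-2 * (π : ℂ) * Complex.I *
              ((∑ i, (k i : ℝ) * η j i : ℝ) : ℂ)) * (if k = ℓ j then (1:ℂ) else 0)
        = a x η * Complex.exp (2 * (π : ℂ) * Complex.I *
            ((∑ j, ∑ i, ((x i - ℓ j i : ℤ) : ℝ) * η j i : ℝ) : ℂ)) := by
      intro η
      have hprod : ∀ j : Fin r,
          (∑' k : Fin n → ℤ, Complex.exp (-2 * (π : ℂ) * Complex.I *
              ((∑ i, (k i : ℝ) * η j i : ℝ) : ℂ)) * (if k = ℓ j then (1:ℂ) else 0))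
            = Complex.exp (-2 * (π : ℂ) * Complex.I *
              ((∑ i, (ℓ j i : ℝ) * η j i : ℝ) : ℂ)) := by
        intro j
        rw [tsum_eq_single (ℓ j) (fun y hy => by simp [hy])]
        simp
      rw [Finset.prod_congr rfl (fun j _ => hprod j), ← Complex.exp_sum,
        mul_comm _ (a x η), mul_assoc, ← Complex.exp_add]
      congr 1
      congr 1
      push_cast
      simp only [Finset.mul_sum, ← Finset.sum_add_distrib]
      refine Finset.sum_congr rfl fun j _ => ?_
      refine Finset.sum_congr rfl fun i _ => ?_
      ring
    calc (∫ ξ in Set.univ.pi fun _ : Fin r => Set.univ.pi fun _ : Fin n => Set.Ico (0:ℝ) 1,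
          a x ξ * Complex.exp (2 * (π : ℂ) * Complex.I *
            ((∑ j, ∑ i, ((x i - ℓ j i : ℤ) : ℝ) * ξ j i : ℝ) : ℂ)))
        = (∫ η in Set.univ.pi fun _ : Fin r => Set.univ.pi fun _ : Fin n => Set.Ico (0:ℝ) 1,
            Complex.exp (2 * (π : ℂ) * Complex.I *
              ((∑ j, ∑ i, (x i : ℝ) * η j i : ℝ) : ℂ)) * a x η *
            ∏ j, ∑' k : Fin n → ℤ,
              Complex.exp (-2 * (π : ℂ) * Complex.I *
                ((∑ i, (k i : ℝ) * η j i : ℝ) : ℂ)) * (if k = ℓ j then (1:ℂ) else 0)) := by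
          exact (integral_congr_ae (Filter.Eventually.of_forall fun η => (hint η))).symm
      _ = ∑' k, (∏ j, ∑' y : Fin n → ℤ,
            (if y = ℓ j then (1:ℂ) else 0) * g k j y) * h k x := hid
      _ = ∑' k, (∏ j, g k j (ℓ j)) * h k x := by
          refine tsum_congr fun k => ?_
          congr 1
          refine Finset.prod_congr rfl fun j _ => ?_
          rw [tsum_eq_single (ℓ j) (fun y hy => by simp [hy])]
          simp
  -- rewrite the goal using the kernel identity
  have hgoal : (fun ℓ : Fin r → Fin n → ℤ =>
      eLpNorm (fun x : Fin n → ℤ =>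
        ∫ ξ in Set.univ.pi fun _ : Fin r => Set.univ.pi fun _ : Fin n => Set.Ico (0:ℝ) 1,
          a x ξ * Complex.exp (2 * (π : ℂ) * Complex.I *
            ((∑ j, ∑ i, ((x i - ℓ j i : ℤ) : ℝ) * ξ j i : ℝ) : ℂ)))
        p Measure.count)
      = fun ℓ => eLpNorm (fun x => ∑' k, (∏ j, g k j (ℓ j)) * h k x) p Measure.count := by
    funext ℓ
    congr 1
    funext x
    exact hker' ℓ x
  rw [hgoal]
  -- the norm bound
  have step1 : ∀ ℓ : Fin r → Fin n → ℤ,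
      eLpNorm (fun x => ∑' k, (∏ j, g k j (ℓ j)) * h k x) p Measure.count
        ≤ ∑' k, (∏ j, (‖g k j (ℓ j)‖₊ : ℝ≥0∞)) * eLpNorm (h k) p Measure.count := by
    intro ℓ
    rw [elp_eq_eLpNorm _ hp0]
    calc elp n p (fun x => (‖∑' k, (∏ j, g k j (ℓ j)) * h k x‖₊ : ℝ≥0∞))
        ≤ elp n p (fun x => ∑' k, (∏ j, (‖g k j (ℓ j)‖₊ : ℝ≥0∞)) * (‖h k x‖₊ : ℝ≥0∞)) := by
          refine elp_mono fun x => le_trans (enorm_tsum_le' _) ?_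
          refine ENNReal.tsum_le_tsum fun k => le_of_eq ?_
          rw [nnnorm_mul, nnnorm_prod, ENNReal.coe_mul, ENNReal.coe_finset_prod]
      _ ≤ ∑' k, elp n p (fun x => (∏ j, (‖g k j (ℓ j)‖₊ : ℝ≥0∞)) * (‖h k x‖₊ : ℝ≥0∞)) :=
          elp_tsum_le hp.1 _
      _ = ∑' k, (∏ j, (‖g k j (ℓ j)‖₊ : ℝ≥0∞)) * eLpNorm (h k) p Measure.count := by
          refine tsum_congr fun k => ?_
          rw [elp_const_mul hp.1, ← elp_eq_eLpNorm _ hp0]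
  refine ne_top_of_le_ne_top hsum ?_
  refine le_trans (mixedNorm_mono n r qj _ _ step1) ?_
  refine le_trans (mixedNorm_tsum_le n r qj hqj1 _) ?_
  refine le_of_eq (tsum_congr fun k => ?_)
  have hrw : (fun ℓ : Fin r → Fin n → ℤ =>
      (∏ j, (‖g k j (ℓ j)‖₊ : ℝ≥0∞)) * eLpNorm (h k) p Measure.count)
      = fun ℓ => eLpNorm (h k) p Measure.count * ∏ j, (fun j (y : Fin n → ℤ) =>
          (‖g k j y‖₊ : ℝ≥0∞)) j (ℓ j) := by
    funext ℓ; rw [mul_comm]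
  rw [hrw, mixedNorm_const_mul n r qj hqj1,
    mixedNorm_prod n r qj hqj1 (fun j (y : Fin n → ℤ) => (‖g k j y‖₊ : ℝ≥0∞))]
  congr 1
  refine Finset.prod_congr rfl fun j _ => ?_
  exact (elp_eq_eLpNorm _ (hqj0 j)).symm
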